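/- Two model structures on the same category with the same class of cofibrations and the same class of fibrant objects are equal (they have the same weak equivalences and fibrations). -/
import Mathlib


open CategoryTheory Limits

universe v u

/-- `f` is a retract of `g` in the arrow category. -/
def IsRetractOfHom {M : Type u} [Category.{v} M] {X Y A B : M} (f : X ⟶ Y) (g : A ⟶ B) : Prop :=
  ∃ (i : X ⟶ A) (r : A ⟶ X) (i' : Y ⟶ B) (r' : B ⟶ Y),
    i ≫ r = 𝟙 X ∧ i' ≫ r' = 𝟙 Y ∧ i ≫ g = f ≫ i' ∧ g ≫ r' = r ≫ f

/-- A class of morphisms is closed under retracts. -/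
def ClosedUnderRetracts {M : Type u} [Category.{v} M] (W : MorphismProperty M) : Prop :=
  ∀ ⦃X Y A B : M⦄ (f : X ⟶ Y) (g : A ⟶ B), IsRetractOfHom f g → W g → W f

/-- A (closed, Quillen) model structure on a category `M`: three classes of morphisms,
weak equivalences `W`, cofibrations `Cof` and fibrations `Fib`, satisfying
two-out-of-three, closure under retracts, the lifting axioms and the factorization
axioms. -/
structure ModelStructure (M : Type u) [Category.{v} M] where
  W : MorphismProperty M
  Cof : MorphismProperty M
  Fib : MorphismProperty M
  w_id : ∀ X : M, W (𝟙 X)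
  two_out_of_three : W.HasTwoOutOfThreeProperty
  w_retract : ClosedUnderRetracts W
  cof_retract : ClosedUnderRetracts Cof
  fib_retract : ClosedUnderRetracts Fib
  lift_acof_fib : ∀ {A B X Y : M} (i : A ⟶ B) (p : X ⟶ Y),
    Cof i → W i → Fib p → HasLiftingProperty i p
  lift_cof_afib : ∀ {A B X Y : M} (i : A ⟶ B) (p : X ⟶ Y),
    Cof i → Fib p → W p → HasLiftingProperty i p
  fact_acof_fib : ∀ {X Y : M} (f : X ⟶ Y),
    ∃ (Z : M) (i : X ⟶ Z) (p : Z ⟶ Y), Cof i ∧ W i ∧ Fib p ∧ i ≫ p = f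
  fact_cof_afib : ∀ {X Y : M} (f : X ⟶ Y),
    ∃ (Z : M) (i : X ⟶ Z) (p : Z ⟶ Y), Cof i ∧ Fib p ∧ W p ∧ i ≫ p = f

namespace ModelStructure

variable {M : Type u} [Category.{v} M] (S : ModelStructure M)

/-- An object is fibrant if the map to the terminal object is a fibration. -/
def Fibrant [HasTerminal M] (X : M) : Prop := S.Fib (terminal.from X)

/-- An object is cofibrant if the map from the initial object is a cofibration. -/
def Cofibrant [HasInitial M] (X : M) : Prop := S.Cof (initial.to X)

end ModelStructure

namespace ModelStructure

variable {M : Type u} [Category.{v} M]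

/-- Retract argument: a map with the RLP against all cofibrations is a trivial fibration. -/
lemma tf_of_rlp (S : ModelStructure M) {X Y : M} (p : X ⟶ Y)
    (h : ∀ ⦃A B : M⦄ (i : A ⟶ B), S.Cof i → HasLiftingProperty i p) :
    S.Fib p ∧ S.W p := by
  obtain ⟨Z, c, q, hc, hfq, hwq, hfac⟩ := S.fact_cof_afib p
  haveI := h c hc
  have sq : CommSq (𝟙 X) c p q := ⟨by simp [hfac]⟩
  have hret : IsRetractOfHom p q :=
    ⟨c, sq.lift, 𝟙 Y, 𝟙 Y, sq.fac_left, Category.id_comp _, by simp [hfac],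
      by simp [sq.fac_right]⟩
  exact ⟨S.fib_retract p q hret hfq, S.w_retract p q hret hwq⟩

/-- Trivial fibrations are determined by the cofibrations. -/
lemma tf_transfer (S T : ModelStructure M) (hcof : S.Cof = T.Cof) {X Y : M} (p : X ⟶ Y)
    (hf : S.Fib p) (hw : S.W p) : T.Fib p ∧ T.W p :=
  tf_of_rlp T p (fun A B i hi => S.lift_cof_afib i p (hcof.symm ▸ hi) hf hw)

/-- Retract argument: a map with the RLP against all trivial cofibrations is a fibration. -/
lemma fib_of_rlp_acof (S : ModelStructure M) {X Y : M} (p : X ⟶ Y)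
    (h : ∀ ⦃A B : M⦄ (i : A ⟶ B), S.Cof i → S.W i → HasLiftingProperty i p) :
    S.Fib p := by
  obtain ⟨Z, j, r, hcj, hwj, hfr, hfac⟩ := S.fact_acof_fib p
  haveI := h j hcj hwj
  have sq : CommSq (𝟙 X) j p r := ⟨by simp [hfac]⟩
  exact S.fib_retract p r
    ⟨j, sq.lift, 𝟙 Y, 𝟙 Y, sq.fac_left, Category.id_comp _, by simp [hfac],
      by simp [sq.fac_right]⟩ hfr

lemma fib_comp (S : ModelStructure M) {X Y Z : M} {p : X ⟶ Y} {q : Y ⟶ Z}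
    (hp : S.Fib p) (hq : S.Fib q) : S.Fib (p ≫ q) :=
  fib_of_rlp_acof S _ (fun A B i hi hwi => by
    haveI := S.lift_acof_fib i p hi hwi hp
    haveI := S.lift_acof_fib i q hi hwi hq
    infer_instance)

/-- Retract argument: a map with the LLP against all trivial fibrations is a cofibration. -/
lemma cof_of_llp_tf (S : ModelStructure M) {A B : M} (f : A ⟶ B)
    (h : ∀ ⦃X Y : M⦄ (p : X ⟶ Y), S.Fib p → S.W p → HasLiftingProperty f p) :
    S.Cof f := by
  obtain ⟨Z, c, t, hcc, hft, hwt, hfac⟩ := S.fact_cof_afib f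
  haveI := h t hft hwt
  have sq : CommSq c f t (𝟙 B) := ⟨by simp [hfac]⟩
  exact S.cof_retract f c
    ⟨𝟙 A, 𝟙 A, sq.lift, t, Category.id_comp _, sq.fac_right, by simp [sq.fac_left],
      by simp [hfac]⟩ hcc

lemma cof_comp (S : ModelStructure M) {A B C : M} {f : A ⟶ B} {g : B ⟶ C}
    (hf : S.Cof f) (hg : S.Cof g) : S.Cof (f ≫ g) :=
  cof_of_llp_tf S _ (fun X Y p hfp hwp => by
    haveI := S.lift_cof_afib f p hf hfp hwp
    haveI := S.lift_cof_afib g p hg hfp hwp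
    infer_instance)

/-- Key lemma (Joyal's trick, limit-free version): an `S`-trivial cofibration between
fibrant objects is a `T`-weak equivalence. -/
lemma w_transfer_of_fibrant [HasTerminal M] (S T : ModelStructure M)
    (hcof : S.Cof = T.Cof) {C D : M} (j : C ⟶ D)
    (hcj : S.Cof j) (hwj : S.W j) (hC : S.Fibrant C) (hD : S.Fibrant D) : T.W j := by
  haveI := S.two_out_of_three
  haveI := T.two_out_of_three
  -- a retraction ρ of j, by lifting against C ⟶ ⊤
  haveI := S.lift_acof_fib j (terminal.from C) hcj hwj hC
  have sq1 : CommSq (𝟙 C) j (terminal.from C) (terminal.from D) := ⟨terminal.hom_ext _ _⟩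
  have hρ : j ≫ sq1.lift = 𝟙 C := sq1.fac_left
  -- factor ρ in T as a cofibration c followed by a trivial fibration t
  obtain ⟨G, c, t, hcc, hft, hwt, hfac⟩ := T.fact_cof_afib sq1.lift
  have htS := tf_transfer T S hcof.symm t hft hwt
  have hwρ : S.W sq1.lift := S.W.of_precomp j sq1.lift hwj (by rw [hρ]; exact S.w_id C)
  have hwcS : S.W c := S.W.of_postcomp c t htS.2 (by rw [hfac]; exact hwρ)
  have hccS : S.Cof c := hcof.symm ▸ hcc
  -- j ≫ c is a T-weak equivalence since (j ≫ c) ≫ t = 𝟙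
  have hwsT : T.W (j ≫ c) := T.W.of_postcomp (j ≫ c) t hwt
    (by rw [Category.assoc, hfac, hρ]; exact T.w_id C)
  -- a retraction of c, by lifting against D ⟶ ⊤ (c is an S-trivial cofibration!)
  haveI := S.lift_acof_fib c (terminal.from D) hccS hwcS hD
  have sq2 : CommSq (𝟙 D) c (terminal.from D) (terminal.from G) := ⟨terminal.hom_ext _ _⟩
  have hρc : c ≫ sq2.lift = 𝟙 D := sq2.fac_left
  -- j is a retract of j ≫ c
  exact T.w_retract j (j ≫ c)
    ⟨𝟙 C, 𝟙 C, c, sq2.lift, Category.id_comp _, hρc, by simp,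
      by rw [Category.assoc, hρc, Category.comp_id, Category.id_comp]⟩ hwsT

/-- A `T`-fibration between fibrant objects is an `S`-fibration. -/
lemma fib_transfer_of_fibrant [HasTerminal M] (S T : ModelStructure M)
    (hcof : S.Cof = T.Cof) {C B : M} (q : C ⟶ B) (hq : T.Fib q)
    (hC : S.Fibrant C) (hB : S.Fibrant B) : S.Fib q := by
  obtain ⟨D, j, r, hcj, hwj, hfr, hfac⟩ := S.fact_acof_fib q
  have hD : S.Fibrant D := by
    show S.Fib (terminal.from D)
    rw [← terminal.comp_from r]
    exact fib_comp S hfr hB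
  have hwjT : T.W j := w_transfer_of_fibrant S T hcof j hcj hwj hC hD
  haveI := T.lift_acof_fib j q (hcof ▸ hcj) hwjT hq
  have sq : CommSq (𝟙 C) j q r := ⟨by simp [hfac]⟩
  exact S.fib_retract q r
    ⟨j, sq.lift, 𝟙 B, 𝟙 B, sq.fac_left, Category.id_comp _, by simp [hfac],
      by simp [sq.fac_right]⟩ hfr

/-- An `S`-trivial cofibration with fibrant codomain is a `T`-weak equivalence. -/
lemma w_transfer_of_fibrant_codomain [HasTerminal M] (S T : ModelStructure M)
    (hcof : S.Cof = T.Cof) (hfib : ∀ X : M, S.Fibrant X ↔ T.Fibrant X)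
    {A B : M} (v : A ⟶ B) (hcv : S.Cof v) (hwv : S.W v) (hB : S.Fibrant B) : T.W v := by
  obtain ⟨C, k, q, hck, hwk, hfq, hfac⟩ := T.fact_acof_fib v
  have hCT : T.Fibrant C := by
    show T.Fib (terminal.from C)
    rw [← terminal.comp_from q]
    exact fib_comp T hfq ((hfib B).1 hB)
  have hqS : S.Fib q := fib_transfer_of_fibrant S T hcof q hfq ((hfib C).2 hCT) hB
  haveI := S.lift_acof_fib v q hcv hwv hqS
  have sq : CommSq k v q (𝟙 B) := ⟨by simp [hfac]⟩
  exact T.w_retract v k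
    ⟨𝟙 A, 𝟙 A, sq.lift, q, Category.id_comp _, sq.fac_right, by simp [sq.fac_left],
      by simp [hfac]⟩ hwk

/-- Any `S`-trivial cofibration is a `T`-weak equivalence. -/
lemma acof_w_transfer [HasTerminal M] (S T : ModelStructure M)
    (hcof : S.Cof = T.Cof) (hfib : ∀ X : M, S.Fibrant X ↔ T.Fibrant X)
    {A B : M} (u : A ⟶ B) (hcu : S.Cof u) (hwu : S.W u) : T.W u := by
  haveI := S.two_out_of_three
  haveI := T.two_out_of_three
  -- fibrant replacement of B in T
  obtain ⟨B', jB, p, hcj, hwj, hfp, hfac⟩ := T.fact_acof_fib (terminal.from B)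
  have hB'T : T.Fibrant B' := by
    show T.Fib (terminal.from B')
    have : p = terminal.from B' := terminal.hom_ext _ _
    rw [← this]; exact hfp
  have hwjS : S.W jB := w_transfer_of_fibrant_codomain T S hcof.symm
    (fun X => (hfib X).symm) jB hcj hwj hB'T
  have hc2 : S.Cof (u ≫ jB) := cof_comp S hcu (hcof.symm ▸ hcj)
  have hw2 : S.W (u ≫ jB) := S.W.comp_mem u jB hwu hwjS
  have h3 : T.W (u ≫ jB) := w_transfer_of_fibrant_codomain S T hcof hfib (u ≫ jB) hc2 hw2
    ((hfib B').2 hB'T)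
  exact T.W.of_postcomp u jB hwj h3

/-- Any `S`-weak equivalence is a `T`-weak equivalence. -/
lemma w_transfer [HasTerminal M] (S T : ModelStructure M)
    (hcof : S.Cof = T.Cof) (hfib : ∀ X : M, S.Fibrant X ↔ T.Fibrant X)
    {A B : M} (f : A ⟶ B) (hf : S.W f) : T.W f := by
  haveI := S.two_out_of_three
  haveI := T.two_out_of_three
  obtain ⟨Z, i, p, hci, hfp, hwp, hfac⟩ := S.fact_cof_afib f
  have hwi : S.W i := S.W.of_postcomp i p hwp (by rw [hfac]; exact hf)
  have hTi : T.W i := acof_w_transfer S T hcof hfib i hci hwi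
  have hTp := (tf_transfer S T hcof p hfp hwp).2
  rw [← hfac]
  exact T.W.comp_mem i p hTi hTp

lemma fib_transfer [HasTerminal M] (S T : ModelStructure M)
    (hcof : S.Cof = T.Cof) (hW : S.W = T.W) {X Y : M} (p : X ⟶ Y) (hp : S.Fib p) :
    T.Fib p := by
  obtain ⟨Z, j, r, hcj, hwj, hfr, hfac⟩ := T.fact_acof_fib p
  have hwjS : S.W j := hW.symm ▸ hwj
  haveI := S.lift_acof_fib j p (hcof.symm ▸ hcj) hwjS hp
  have sq : CommSq (𝟙 X) j p r := ⟨by simp [hfac]⟩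
  exact T.fib_retract p r
    ⟨j, sq.lift, 𝟙 Y, 𝟙 Y, sq.fac_left, Category.id_comp _, by simp [hfac],
      by simp [sq.fac_right]⟩ hfr

end ModelStructure

/-- Two model structures on the same category with the same class of
cofibrations and the same class of fibrant objects are equal: they have the same weak
equivalences and the same fibrations. -/
theorem modelStructure_eq_of_cof_eq_of_fibrant_iff
    {M : Type u} [Category.{v} M] [HasTerminal M]
    (S T : ModelStructure M) (hcof : S.Cof = T.Cof)
    (hfib : ∀ X : M, S.Fibrant X ↔ T.Fibrant X) :
    S.W = T.W ∧ S.Fib = T.Fib := by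
  have hW : S.W = T.W := by
    funext X Y f
    exact propext ⟨ModelStructure.w_transfer S T hcof hfib f,
      ModelStructure.w_transfer T S hcof.symm (fun X => (hfib X).symm) f⟩
  refine ⟨hW, ?_⟩
  funext X Y p
  exact propext ⟨ModelStructure.fib_transfer S T hcof hW p,
    ModelStructure.fib_transfer T S hcof.symm hW.symm p⟩
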